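/- Let M be an n × m random matrix with independent complex entries of zero mean and unit variance, and let s ⊆ {1,…,n} with |s| = l ≤ m. Then E[det((M M*)_{s,s})] = C(m,l) · l!, where (M M*)_{s,s} is the principal submatrix of M M* with rows and columns indexed by s. -/

import Mathlib

open MeasureTheory ProbabilityTheory Matrix

/-- Expectation of the product of two independent complex random variables. -/
lemma indep_integral_mul_complex {Ω : Type*} [MeasurableSpace Ω] {μ : Measure Ω}
    [IsProbabilityMeasure μ]
    {X Y : Ω → ℂ} (h : IndepFun X Y μ) (hX : Measurable X) (hY : Measurable Y) :
    ∫ ω, X ω * Y ω ∂μ = (∫ ω, X ω ∂μ) * ∫ ω, Y ω ∂μ := by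
  have hmap : μ.map (fun ω => (X ω, Y ω)) = (μ.map X).prod (μ.map Y) :=
    (indepFun_iff_map_prod_eq_prod_map_map hX.aemeasurable hY.aemeasurable).mp h
  haveI : IsProbabilityMeasure (μ.map X) := Measure.isProbabilityMeasure_map hX.aemeasurable
  haveI : IsProbabilityMeasure (μ.map Y) := Measure.isProbabilityMeasure_map hY.aemeasurable
  calc ∫ ω, X ω * Y ω ∂μ
      = ∫ p : ℂ × ℂ, p.1 * p.2 ∂(μ.map (fun ω => (X ω, Y ω))) := by
        rw [integral_map (f := fun p : ℂ × ℂ => p.1 * p.2) (hX.prodMk hY).aemeasurable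
          (measurable_fst.mul measurable_snd).aestronglyMeasurable]
    _ = ∫ p : ℂ × ℂ, p.1 * p.2 ∂((μ.map X).prod (μ.map Y)) := by rw [hmap]
    _ = (∫ x : ℂ, x ∂(μ.map X)) * ∫ y : ℂ, y ∂(μ.map Y) :=
        integral_prod_mul (f := fun x : ℂ => x) (g := fun y : ℂ => y)
    _ = (∫ ω, X ω ∂μ) * ∫ ω, Y ω ∂μ := by
        rw [integral_map (φ := X) (f := fun x : ℂ => x) hX.aemeasurable
            measurable_id.aestronglyMeasurable,
          integral_map (φ := Y) (f := fun y : ℂ => y) hY.aemeasurable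
            measurable_id.aestronglyMeasurable]

theorem stmt_6 {Ω : Type*} [MeasurableSpace Ω] (μ : Measure Ω) [IsProbabilityMeasure μ]
    (n m l : ℕ) (hlm : l ≤ m)
    (M : Ω → Matrix (Fin n) (Fin m) ℂ)
    (hmeas : ∀ i j, Measurable (fun ω => M ω i j))
    (hindep : iIndepFun
      (fun (p : Fin n × Fin m) ω => M ω p.1 p.2) μ)
    (hmean : ∀ i j, ∫ ω, M ω i j ∂μ = 0)
    (hvar : ∀ i j, ∫ ω, ‖M ω i j‖ ^ 2 ∂μ = 1)
    (s : Finset (Fin n)) (hs : s.card = l) :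
    ∫ ω, ((M ω * (M ω)ᴴ).submatrix (fun i : ↥s => (i : Fin n))
        (fun j : ↥s => (j : Fin n))).det ∂μ
      = (m.choose l : ℂ) * (l.factorial : ℂ) := by
  classical
  have measStar : Measurable (star : ℂ → ℂ) := continuous_star.measurable
  -- basic integrability of entries
  have sqInt : ∀ i j, Integrable (fun ω => ‖M ω i j‖ ^ 2) μ := by
    intro i j
    by_contra h
    have := hvar i j
    rw [integral_undef h] at this
    exact zero_ne_one this
  have entInt : ∀ i j, Integrable (fun ω => M ω i j) μ := by
    intro i j
    have hm : MemLp (fun ω => M ω i j) 2 μ :=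
      (memLp_two_iff_integrable_sq_norm (hmeas i j).aestronglyMeasurable).mpr (sqInt i j)
    exact hm.integrable one_le_two
  have starInt : ∀ i j, Integrable (fun ω => star (M ω i j)) μ := by
    intro i j
    refine ⟨(measStar.comp (hmeas i j)).aestronglyMeasurable, ?_⟩
    simpa only [HasFiniteIntegral, enorm_eq_nnnorm, nnnorm_star] using (entInt i j).2
  -- single factor lemmas
  have sqEq : ∀ (i : Fin n) (a : Fin m),
      (fun ω => M ω i a * star (M ω i a)) = fun ω => ((‖M ω i a‖ ^ 2 : ℝ) : ℂ) := by
    intro i a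
    funext ω
    rw [Complex.star_def, Complex.mul_conj, Complex.normSq_eq_norm_sq]
  have singleInt : ∀ (i : Fin n) (a b : Fin m),
      Integrable (fun ω => M ω i a * star (M ω i b)) μ := by
    intro i a b
    rcases eq_or_ne a b with rfl | hab
    · rw [sqEq i a]
      exact (sqInt i a).ofReal
    · have hp : IndepFun (fun ω => M ω i a) (fun ω => star (M ω i b)) μ := by
        have h0 := hindep.indepFun (i := (i, a)) (j := (i, b)) (by simp [hab])
        exact h0.comp measurable_id measStar
      exact hp.integrable_mul (entInt i a) (starInt i b)
  have singleVal : ∀ (i : Fin n) (a b : Fin m),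
      ∫ ω, M ω i a * star (M ω i b) ∂μ = if a = b then 1 else 0 := by
    intro i a b
    rcases eq_or_ne a b with rfl | hab
    · rw [if_pos rfl, sqEq i a]
      rw [show ∫ ω, ((‖M ω i a‖ ^ 2 : ℝ) : ℂ) ∂μ = ((∫ ω, ‖M ω i a‖ ^ 2 ∂μ : ℝ) : ℂ) from
        integral_ofReal, hvar i a, Complex.ofReal_one]
    · rw [if_neg hab]
      have hp : IndepFun (fun ω => M ω i a) (fun ω => star (M ω i b)) μ := by
        have h0 := hindep.indepFun (i := (i, a)) (j := (i, b)) (by simp [hab])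
        exact h0.comp measurable_id measStar
      rw [indep_integral_mul_complex hp (hmeas i a) (measStar.comp (hmeas i b))]
      have h1 : ∫ ω, star (M ω i b) ∂μ = 0 := by
        show ∫ ω, (starRingEnd ℂ) (M ω i b) ∂μ = 0
        rw [integral_conj, hmean i b, map_zero]
      rw [h1, mul_zero]
  -- key lemma: expectation of a product over distinct rows factorizes
  have key : ∀ (t : Finset {x // x ∈ s}) (c d : {x // x ∈ s} → Fin m),
      Integrable (fun ω => ∏ i ∈ t, (M ω ↑i (c i) * star (M ω ↑i (d i)))) μ ∧
      ∫ ω, ∏ i ∈ t, (M ω ↑i (c i) * star (M ω ↑i (d i))) ∂μ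
        = ∏ i ∈ t, ∫ ω, M ω ↑i (c i) * star (M ω ↑i (d i)) ∂μ := by
    intro t
    induction t using Finset.induction_on with
    | empty => intro c d; simp
    | @insert a t' ha ih =>
      intro c d
      have hmemS : ∀ j : Fin m, ((a : Fin n), j) ∈
          (({(a : Fin n)} : Finset (Fin n)) ×ˢ (Finset.univ : Finset (Fin m))) := fun j =>
        Finset.mem_product.mpr ⟨Finset.mem_singleton_self _, Finset.mem_univ _⟩
      have hmemT : ∀ (i : {x // x ∈ s}), i ∈ t' → ∀ j : Fin m, ((i : Fin n), j) ∈
          ((t'.image (fun i : {x // x ∈ s} => (i : Fin n))) ×ˢ (Finset.univ : Finset (Fin m))) :=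
        fun i hi j =>
        Finset.mem_product.mpr ⟨Finset.mem_image_of_mem _ hi, Finset.mem_univ _⟩
      have hdisj : Disjoint
          (({(a : Fin n)} : Finset (Fin n)) ×ˢ (Finset.univ : Finset (Fin m)))
          ((t'.image (fun i : {x // x ∈ s} => (i : Fin n))) ×ˢ (Finset.univ : Finset (Fin m))) := by
        rw [Finset.disjoint_left]
        rintro ⟨p1, p2⟩ hp hq
        rw [Finset.mem_product, Finset.mem_singleton] at hp
        rw [Finset.mem_product, Finset.mem_image] at hq
        obtain ⟨⟨b, hb, hb'⟩, -⟩ := hq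
        rw [hp.1] at hb'
        exact ha (by rwa [Subtype.coe_injective hb'] at hb)
      have h1 := hindep.indepFun_finset _ _ hdisj (fun p => hmeas p.1 p.2)
      have h2 : IndepFun (fun ω => M ω ↑a (c a) * star (M ω ↑a (d a)))
          (fun ω => ∏ i ∈ t', (M ω ↑i (c i) * star (M ω ↑i (d i)))) μ := by
        have h3 := h1.comp
          (φ := fun v : (↥(({(a : Fin n)} : Finset (Fin n)) ×ˢ (Finset.univ : Finset (Fin m)))) → ℂ
            => v ⟨((a : Fin n), c a), hmemS _⟩ * star (v ⟨((a : Fin n), d a), hmemS _⟩))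
          (ψ := fun v : (↥((t'.image (fun i : {x // x ∈ s} => (i : Fin n))) ×ˢ
              (Finset.univ : Finset (Fin m)))) → ℂ
            => ∏ i ∈ t'.attach,
              (v ⟨((i.1 : Fin n), c i.1), hmemT i.1 i.2 _⟩
                * star (v ⟨((i.1 : Fin n), d i.1), hmemT i.1 i.2 _⟩)))
          (by
            apply Measurable.mul
            · exact measurable_pi_apply _
            · exact measStar.comp (measurable_pi_apply _))
          (by
            apply Finset.measurable_prod
            intro i _
            apply Measurable.mul
            · exact measurable_pi_apply _
            · exact measStar.comp (measurable_pi_apply _))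
        convert h3 using 1
        · rfl
        funext ω
        simp only [Function.comp_apply]
        exact (Finset.prod_attach t' fun i => M ω ↑i (c i) * star (M ω ↑i (d i))).symm
      have measA : Measurable (fun ω => M ω ↑a (c a) * star (M ω ↑a (d a))) :=
        (hmeas _ _).mul (measStar.comp (hmeas _ _))
      have measB : Measurable (fun ω => ∏ i ∈ t', (M ω ↑i (c i) * star (M ω ↑i (d i)))) :=
        Finset.measurable_prod _ fun i _ => (hmeas _ _).mul (measStar.comp (hmeas _ _))
      constructor
      · simp only [Finset.prod_insert ha]
        exact h2.integrable_mul (singleInt _ _ _) (ih c d).1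
      · simp only [Finset.prod_insert ha]
        rw [indep_integral_mul_complex h2 measA measB, (ih c d).2]
  -- determinant expansion
  have hdet : ∀ ω : Ω,
      (((M ω * (M ω)ᴴ).submatrix (fun i : ↥s => (i : Fin n)) (fun j : ↥s => (j : Fin n))).det)
        = ∑ σ : Equiv.Perm {x // x ∈ s}, ((Equiv.Perm.sign σ : ℤ) : ℂ) *
            ∑ c : {x // x ∈ s} → Fin m,
              ∏ i : {x // x ∈ s}, (M ω ↑i (c (σ⁻¹ i)) * star (M ω ↑i (c i))) := by
    intro ω
    rw [Matrix.det_apply']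
    refine Finset.sum_congr rfl fun σ _ => ?_
    congr 1
    have expand : ∏ i : {x // x ∈ s},
        ((M ω * (M ω)ᴴ).submatrix (fun i : ↥s => (i : Fin n)) (fun j : ↥s => (j : Fin n))) (σ i) i
        = ∏ i : {x // x ∈ s}, ∑ j : Fin m, (M ω ↑(σ i) j * star (M ω ↑i j)) := by
      refine Finset.prod_congr rfl fun i _ => ?_
      simp [Matrix.submatrix_apply, Matrix.mul_apply, Matrix.conjTranspose_apply]
    rw [expand, Finset.prod_univ_sum, Fintype.piFinset_univ]
    refine Finset.sum_congr rfl fun c _ => ?_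
    rw [Finset.prod_mul_distrib, Finset.prod_mul_distrib]
    congr 1
    calc ∏ i : {x // x ∈ s}, M ω ↑(σ i) (c i)
        = ∏ i : {x // x ∈ s}, M ω ↑(σ i) (c (σ⁻¹ (σ i))) := by
          refine Finset.prod_congr rfl fun i _ => by rw [← Equiv.Perm.mul_apply, inv_mul_cancel, Equiv.Perm.one_apply]
      _ = ∏ i : {x // x ∈ s}, M ω ↑i (c (σ⁻¹ i)) :=
          Equiv.prod_comp σ (fun k => M ω ↑k (c (σ⁻¹ k)))
  -- main computation
  calc ∫ ω, (((M ω * (M ω)ᴴ).submatrix (fun i : ↥s => (i : Fin n))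
          (fun j : ↥s => (j : Fin n))).det) ∂μ
      = ∑ σ : Equiv.Perm {x // x ∈ s}, ((Equiv.Perm.sign σ : ℤ) : ℂ) *
          ∑ c : {x // x ∈ s} → Fin m,
            ∫ ω, ∏ i : {x // x ∈ s}, (M ω ↑i (c (σ⁻¹ i)) * star (M ω ↑i (c i))) ∂μ := by
        simp only [hdet]
        rw [integral_finset_sum _ (fun σ _ =>
          ((integrable_finset_sum _ fun c _ => (key Finset.univ _ _).1).const_mul _))]
        refine Finset.sum_congr rfl fun σ _ => ?_
        rw [integral_const_mul, integral_finset_sum _ (fun c _ => (key Finset.univ _ _).1)]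
    _ = ∑ σ : Equiv.Perm {x // x ∈ s}, ((Equiv.Perm.sign σ : ℤ) : ℂ) *
          ∑ c : {x // x ∈ s} → Fin m,
            (if ∀ i, c (σ⁻¹ i) = c i then (1 : ℂ) else 0) := by
        refine Finset.sum_congr rfl fun σ _ => ?_
        congr 1
        refine Finset.sum_congr rfl fun c _ => ?_
        rw [(key Finset.univ (fun i => c (σ⁻¹ i)) c).2]
        calc ∏ i : {x // x ∈ s}, ∫ ω, M ω ↑i (c (σ⁻¹ i)) * star (M ω ↑i (c i)) ∂μ
            = ∏ i : {x // x ∈ s}, (if c (σ⁻¹ i) = c i then (1 : ℂ) else 0) :=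
              Finset.prod_congr rfl fun i _ => singleVal _ _ _
          _ = if ∀ i, c (σ⁻¹ i) = c i then (1 : ℂ) else 0 := by
              rw [Finset.prod_boole]
              simp
    _ = ∑ c : {x // x ∈ s} → Fin m, ∑ σ : Equiv.Perm {x // x ∈ s},
          ((Equiv.Perm.sign σ : ℤ) : ℂ) * (if ∀ i, c (σ⁻¹ i) = c i then (1 : ℂ) else 0) := by
        simp_rw [Finset.mul_sum]
        exact Finset.sum_comm
    _ = ∑ c : {x // x ∈ s} → Fin m, (if Function.Injective c then (1 : ℂ) else 0) := by
        refine Finset.sum_congr rfl fun c _ => ?_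
        by_cases hc : Function.Injective c
        · rw [if_pos hc]
          have hone : ∑ σ : Equiv.Perm {x // x ∈ s},
              ((Equiv.Perm.sign σ : ℤ) : ℂ) * (if ∀ i, c (σ⁻¹ i) = c i then (1 : ℂ) else 0)
              = ((Equiv.Perm.sign (1 : Equiv.Perm {x // x ∈ s}) : ℤ) : ℂ) *
                (if ∀ i, c ((1 : Equiv.Perm {x // x ∈ s})⁻¹ i) = c i then (1 : ℂ) else 0) := by
            refine Finset.sum_eq_single _ ?_ ?_
            · intro σ _ hσ
              have hneg : ¬ (∀ i, c (σ⁻¹ i) = c i) := by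
                intro hcon
                apply hσ
                refine Equiv.ext fun i => ?_
                have h5 : σ⁻¹ (σ i) = σ i := hc (hcon (σ i))
                rw [← Equiv.Perm.mul_apply, inv_mul_cancel, Equiv.Perm.one_apply] at h5
                simpa using h5.symm
              rw [if_neg hneg, mul_zero]
            · intro h
              exact absurd (Finset.mem_univ _) h
          rw [hone]
          simp
        · rw [if_neg hc]
          obtain ⟨i, j, hcij, hij⟩ : ∃ i j, c i = c j ∧ i ≠ j := by
            rw [Function.Injective] at hc
            push_neg at hc
            obtain ⟨i, j, h1, h2⟩ := hc
            exact ⟨i, j, h1, h2⟩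
          have hswap : ∀ x, c (Equiv.swap i j x) = c x := by
            intro x
            rcases eq_or_ne x i with rfl | hxi
            · rw [Equiv.swap_apply_left]; exact hcij.symm
            rcases eq_or_ne x j with rfl | hxj
            · rw [Equiv.swap_apply_right]; exact hcij
            · rw [Equiv.swap_apply_of_ne_of_ne hxi hxj]
          have hcond : ∀ (σ : Equiv.Perm {x // x ∈ s}) (k : {x // x ∈ s}),
              c ((σ * Equiv.swap i j)⁻¹ k) = c (σ⁻¹ k) := by
            intro σ k
            rw [_root_.mul_inv_rev, Equiv.Perm.mul_apply, Equiv.swap_inv]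
            exact hswap _
          refine Finset.sum_ninvolution (fun σ => σ * Equiv.swap i j) ?_ ?_ ?_ ?_
          · intro σ
            have hsg : ((Equiv.Perm.sign (σ * Equiv.swap i j) : ℤ) : ℂ)
                = -((Equiv.Perm.sign σ : ℤ) : ℂ) := by
              rw [Equiv.Perm.sign_mul, Equiv.Perm.sign_swap hij]
              push_cast
              ring
            by_cases hcnd : ∀ k, c (σ⁻¹ k) = c k
            · rw [if_pos hcnd, if_pos (fun k => (hcond σ k).trans (hcnd k)), hsg]
              ring
            · have hneg2 : ¬ (∀ k, c ((σ * Equiv.swap i j)⁻¹ k) = c k) :=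
                fun hcon => hcnd fun k => ((hcond σ k).symm.trans (hcon k))
              rw [if_neg hcnd, if_neg hneg2, mul_zero, mul_zero, add_zero]
          · intro σ _ h
            have h' : σ * Equiv.swap i j = σ := h
            have h1 : Equiv.swap i j = 1 := mul_left_cancel (a := σ) (by rw [h', mul_one])
            have h2 : Equiv.swap i j i = i := by rw [h1]; rfl
            rw [Equiv.swap_apply_left] at h2
            exact hij h2.symm
          · intro σ
            exact Finset.mem_univ _
          · intro σ
            show σ * Equiv.swap i j * Equiv.swap i j = σ
            rw [mul_assoc, Equiv.swap_mul_self, mul_one]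
    _ = ((Finset.univ.filter fun c : {x // x ∈ s} → Fin m => Function.Injective c).card : ℂ) :=
        Finset.sum_boole _ _
    _ = ((m.descFactorial l : ℕ) : ℂ) := by
        have hcard : (Finset.univ.filter fun c : {x // x ∈ s} → Fin m =>
            Function.Injective c).card = m.descFactorial l := by
          rw [← Fintype.card_subtype,
            Fintype.card_congr (Equiv.subtypeInjectiveEquivEmbedding {x // x ∈ s} (Fin m)),
            Fintype.card_embedding_eq, Fintype.card_coe, Fintype.card_fin, hs]
        rw [hcard]
    _ = (m.choose l : ℂ) * (l.factorial : ℂ) := by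
        rw [Nat.descFactorial_eq_factorial_mul_choose]
        push_cast
        ring
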